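/- Let x₁,…,x_m ∈ ℝⁿ with m ≥ 3 and suppose 0 lies in the convex hull of {x₁,…,x_m}. Then there exist indices 1 ≤ i₀ < j₀ ≤ m such that the convex hull of {x_{i₀}, x_{i₀+1}, …, x_{j₀}} intersects the negative of the convex hull of {x_{j₀}, x_{j₀+1}, …, x_m, x₁, …, x_{i₀−1}, x_{i₀}} (indices taken cyclically); that is, there exists p with p ∈ conv{x_{i₀},…,x_{j₀}} and −p ∈ conv{x_{j₀},…,x_{i₀}} (cyclically). -/
import Mathlib

open Finset
open scoped Classical

/-- Extract index-based weights from convex hull membership. -/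
lemma stmt2_weights {n m : ℕ} (x : ℕ → EuclideanSpace ℝ (Fin n))
    (h0 : (0 : EuclideanSpace ℝ (Fin n)) ∈ convexHull ℝ (x '' Set.Iio m)) :
    ∃ l : ℕ → ℝ, (∀ i, 0 ≤ l i) ∧ ∑ i ∈ range m, l i = 1 ∧
      ∑ i ∈ range m, l i • x i = 0 := by
  rw [_root_.convexHull_eq] at h0
  obtain ⟨ι, t, w, z, hw0, hw1, hz, hc⟩ := h0
  have hk : ∀ i ∈ t, ∃ r, r < m ∧ x r = z i := by
    intro i hi
    obtain ⟨r, hr, hxr⟩ := hz i hi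
    exact ⟨r, hr, hxr⟩
  set k : ι → ℕ := fun i => if h : ∃ r, r < m ∧ x r = z i then h.choose else 0 with hkdef
  have hkm : ∀ i ∈ t, k i ∈ range m := by
    intro i hi
    have h := hk i hi
    simp only [hkdef, dif_pos h]
    exact mem_range.2 h.choose_spec.1
  have hkx : ∀ i ∈ t, x (k i) = z i := by
    intro i hi
    have h := hk i hi
    simp only [hkdef, dif_pos h]
    exact h.choose_spec.2
  refine ⟨fun r => ∑ i ∈ t.filter (fun i => k i = r), w i, ?_, ?_, ?_⟩
  · intro r
    exact Finset.sum_nonneg fun i hi => hw0 i (Finset.mem_filter.1 hi).1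
  · rw [Finset.sum_fiberwise_of_maps_to hkm]; exact hw1
  · have h1 : ∀ r ∈ range m, (∑ i ∈ t.filter (fun i => k i = r), w i) • x r
        = ∑ i ∈ t.filter (fun i => k i = r), w i • x (k i) := by
      intro r _
      rw [Finset.sum_smul]
      refine Finset.sum_congr rfl fun i hi => ?_
      rw [(Finset.mem_filter.1 hi).2]
    rw [Finset.sum_congr rfl h1, Finset.sum_fiberwise_of_maps_to hkm]
    have h2 : ∑ i ∈ t, w i • x (k i) = ∑ i ∈ t, w i • z i :=
      Finset.sum_congr rfl fun i hi => by rw [hkx i hi]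
    rw [h2, ← Finset.centerMass_eq_of_sum_1 _ _ hw1, hc]

/-- If `0` lies in the convex hull of points `x 0, …, x (m-1)` (`m ≥ 3`, in a fixed
cyclic order), then there are indices `i₀ < j₀ < m` and a point `p` lying in the convex
hull of the cyclic block `x i₀, …, x j₀`, with `-p` lying in the convex hull of the
complementary cyclic block `x j₀, …, x (m-1), x 0, …, x i₀`. -/
theorem stmt2 {n m : ℕ} (hm : 3 ≤ m) (x : ℕ → EuclideanSpace ℝ (Fin n))
    (h0 : (0 : EuclideanSpace ℝ (Fin n)) ∈ convexHull ℝ (x '' Set.Iio m)) :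
    ∃ i₀ j₀ : ℕ, i₀ < j₀ ∧ j₀ < m ∧
      ∃ p : EuclideanSpace ℝ (Fin n),
        p ∈ convexHull ℝ (x '' Set.Icc i₀ j₀) ∧
        -p ∈ convexHull ℝ (x '' (Set.Icc j₀ (m - 1) ∪ Set.Icc 0 i₀)) := by
  obtain ⟨l, hl0, hl1, hlx⟩ := stmt2_weights x h0
  -- least index j with partial sum ≥ 1/2
  have hex : ∃ j, (1:ℝ)/2 ≤ ∑ i ∈ range (j+1), l i := by
    refine ⟨m - 1, ?_⟩
    have hmm : m - 1 + 1 = m := by omega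
    rw [hmm, hl1]; norm_num
  set j := Nat.find hex with hjdef
  have hj : (1:ℝ)/2 ≤ ∑ i ∈ range (j+1), l i := Nat.find_spec hex
  have hjm : j < m := by
    have := Nat.find_min' hex (m := m - 1) (by
      have hmm : m - 1 + 1 = m := by omega
      rw [hmm, hl1]; norm_num)
    omega
  set pre := ∑ i ∈ range j, l i with hpredef
  have hpre2 : pre ≤ 1/2 := by
    rcases Nat.eq_zero_or_pos j with h | h
    · simp only [hpredef, h, range_zero, sum_empty]; norm_num
    · have h2 := Nat.find_min hex (m := j - 1) (by omega)
      have hj1 : j - 1 + 1 = j := by omega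
      rw [hj1] at h2
      linarith [not_le.1 h2]
  have hS : pre + l j = ∑ i ∈ range (j+1), l i := (Finset.sum_range_succ l j).symm
  set j₀ := max j 1 with hj0def
  have hj0m : j₀ < m := by omega
  -- the weight functions
  set μ : ℕ → ℝ := fun i => if i < j then 2 * l i else if i = j then 1 - 2*pre else 0 with hμdef
  set ν : ℕ → ℝ := fun i => if i = j then 2*(pre + l j) - 1
      else if j < i ∧ i < m then 2 * l i else 0 with hνdef
  have hμ0 : ∀ i, 0 ≤ μ i := by
    intro i
    simp only [hμdef]
    split_ifs with h1 h2
    · have := hl0 i; linarith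
    · linarith
    · exact le_refl 0
  have hν0 : ∀ i, 0 ≤ ν i := by
    intro i
    simp only [hνdef]
    split_ifs with h1 h2
    · linarith [hS, hj]
    · have := hl0 i; linarith
    · exact le_refl 0
  have hμz : ∀ i, j < i → μ i = 0 := by
    intro i hi
    simp only [hμdef]
    rw [if_neg (by omega), if_neg (by omega)]
  -- sums of μ
  have hμsumj : ∑ i ∈ range (j+1), μ i = 1 := by
    rw [Finset.sum_range_succ]
    have h1 : ∑ i ∈ range j, μ i = 2 * pre := by
      rw [hpredef, Finset.mul_sum]
      refine Finset.sum_congr rfl fun i hi => ?_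
      simp only [hμdef]
      rw [if_pos (mem_range.1 hi)]
    have h2 : μ j = 1 - 2 * pre := by simp [hμdef]
    rw [h1, h2]; ring
  have hμsum : ∀ N, j < N → ∑ i ∈ range N, μ i = 1 := by
    intro N hN
    rw [← hμsumj]
    exact (Finset.sum_subset (Finset.range_subset_range.2 (by omega))
      (fun i _ hi => hμz i (by simp [mem_range, Nat.lt_succ_iff] at hi; omega))).symm
  -- the point p
  set p : EuclideanSpace ℝ (Fin n) := ∑ i ∈ range (j₀+1), μ i • x i with hpdef
  have hpm : p = ∑ i ∈ range m, μ i • x i := by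
    refine Finset.sum_subset (Finset.range_subset_range.2 (by omega)) fun i _ hi => ?_
    rw [hμz i (by simp [mem_range, Nat.lt_succ_iff] at hi; omega), zero_smul]
  -- μ + ν = 2 l on range m
  have hμν : ∀ i ∈ range m, μ i + ν i = 2 * l i := by
    intro i hi
    rw [mem_range] at hi
    rcases lt_trichotomy i j with h | h | h
    · simp only [hμdef, hνdef]
      rw [if_pos h, if_neg (by omega), if_neg (by omega)]
      ring
    · subst h
      simp only [hμdef, hνdef, lt_irrefl, if_false, if_true, eq_self_iff_true]
      ring
    · simp only [hμdef, hνdef]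
      rw [if_neg (by omega), if_neg (by omega), if_neg (by omega),
        if_pos ⟨h, hi⟩]
      ring
  -- sum of ν over range m
  have hνsum : ∑ i ∈ range m, ν i = 1 := by
    have h1 : ∑ i ∈ range m, (μ i + ν i) = 2 := by
      rw [Finset.sum_congr rfl hμν, ← Finset.mul_sum, hl1]; norm_num
    rw [Finset.sum_add_distrib, hμsum m (by omega)] at h1
    linarith
  -- -p as a ν-combination
  have hνx : ∑ i ∈ range m, ν i • x i = -p := by
    have h1 : ∑ i ∈ range m, (μ i + ν i) • x i = 0 := by
      have h2 : ∀ i ∈ range m, (μ i + ν i) • x i = (2:ℝ) • (l i • x i) := by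
        intro i hi
        rw [hμν i hi, smul_smul]
      rw [Finset.sum_congr rfl h2, ← Finset.smul_sum, hlx, smul_zero]
    have h3 : ∑ i ∈ range m, (μ i + ν i) • x i
        = ∑ i ∈ range m, μ i • x i + ∑ i ∈ range m, ν i • x i := by
      rw [← Finset.sum_add_distrib]
      exact Finset.sum_congr rfl fun i _ => (add_smul _ _ _)
    rw [h3] at h1
    rw [← hpm] at h1
    linear_combination (norm := module) h1
  -- membership of p
  have hmemA : ∀ i ∈ range (j₀+1), x i ∈ x '' Set.Icc 0 j₀ := by
    intro i hi
    rw [mem_range, Nat.lt_succ_iff] at hi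
    exact Set.mem_image_of_mem x ⟨Nat.zero_le _, hi⟩
  have hpmem : p ∈ convexHull ℝ (x '' Set.Icc 0 j₀) := by
    have hc := Finset.centerMass_mem_convexHull (t := range (j₀+1)) (w := μ) (z := x)
      (fun i _ => hμ0 i) (by rw [hμsum (j₀+1) (by omega)]; norm_num) hmemA
    rwa [Finset.centerMass_eq_of_sum_1 _ _ (hμsum (j₀+1) (by omega)), ← hpdef] at hc
  -- the finset for the second block
  set tB : Finset ℕ := insert 0 (Finset.Icc j₀ (m-1)) with htBdef
  have htBsub : tB ⊆ range m := by
    intro i hi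
    rw [htBdef, Finset.mem_insert, Finset.mem_Icc] at hi
    rw [mem_range]
    omega
  have hνz : ∀ i ∈ range m, i ∉ tB → ν i = 0 := by
    intro i hi hni
    rw [mem_range] at hi
    rw [htBdef, Finset.mem_insert, Finset.mem_Icc] at hni
    push_neg at hni
    simp only [hνdef]
    rw [if_neg (by omega), if_neg (by omega)]
  have hνsumB : ∑ i ∈ tB, ν i = 1 := by
    rw [← hνsum]
    exact (Finset.sum_subset htBsub hνz)
  have hνxB : ∑ i ∈ tB, ν i • x i = -p := by
    rw [← hνx]
    refine Finset.sum_subset htBsub fun i hi hni => ?_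
    rw [hνz i hi hni, zero_smul]
  have hmemB : ∀ i ∈ tB, x i ∈ x '' (Set.Icc j₀ (m - 1) ∪ Set.Icc 0 0) := by
    intro i hi
    rw [htBdef, Finset.mem_insert, Finset.mem_Icc] at hi
    rcases hi with h | h
    · exact Set.mem_image_of_mem x (Set.mem_union_right _ ⟨Nat.zero_le _, by omega⟩)
    · exact Set.mem_image_of_mem x (Set.mem_union_left _ ⟨h.1, h.2⟩)
  have hnpmem : -p ∈ convexHull ℝ (x '' (Set.Icc j₀ (m - 1) ∪ Set.Icc 0 0)) := by
    have hc := Finset.centerMass_mem_convexHull (t := tB) (w := ν) (z := x)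
      (fun i _ => hν0 i) (by rw [hνsumB]; norm_num) hmemB
    rwa [Finset.centerMass_eq_of_sum_1 _ _ hνsumB, hνxB] at hc
  exact ⟨0, j₀, by omega, hj0m, p, by simpa using hpmem, hnpmem⟩
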